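/- Consider the Dirac-GAN ODE system dφ/dt = -θ̃, dθ̃/dt = φ (obtained from the WGAN losses h1(x)=h3(x)=x, h2(x)=-x with c=0). Every solution satisfies φ(t)² + θ̃(t)² = φ(0)² + θ̃(0)² for all t, so no solution with nonzero initial value converges to the equilibrium (0,0); the system is not asymptotically stable. -/

import Mathlib

open Filter in
/-- The Dirac-WGAN gradient-flow dynamics rotate on circles: the squared norm is conserved,
so no nonzero solution converges to the equilibrium (0,0). -/
theorem dirac_wgan_not_asymptotically_stable
    (φ θ : ℝ → ℝ)
    (hφ : ∀ t : ℝ, HasDerivAt φ (-(θ t)) t)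
    (hθ : ∀ t : ℝ, HasDerivAt θ (φ t) t) :
    (∀ t : ℝ, φ t ^ 2 + θ t ^ 2 = φ 0 ^ 2 + θ 0 ^ 2) ∧
    ((φ 0, θ 0) ≠ (0, 0) →
      ¬ Tendsto (fun t : ℝ => (φ t, θ t)) atTop (nhds ((0 : ℝ), (0 : ℝ)))) := by
  have hconst : ∀ t : ℝ, φ t ^ 2 + θ t ^ 2 = φ 0 ^ 2 + θ 0 ^ 2 := by
    have hderiv : ∀ t : ℝ, HasDerivAt (fun t => φ t ^ 2 + θ t ^ 2) 0 t := by
      intro t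
      have h1 : HasDerivAt (fun t => φ t ^ 2 + θ t ^ 2) _ t := ((hφ t).pow 2).add ((hθ t).pow 2)
      convert h1 using 1
      ring
    intro t
    have := is_const_of_deriv_eq_zero (f := fun t => φ t ^ 2 + θ t ^ 2)
      (fun x => (hderiv x).differentiableAt) (fun x => (hderiv x).deriv) t 0
    simpa using this
  refine ⟨hconst, fun hne htend => ?_⟩
  have hpos : 0 < φ 0 ^ 2 + θ 0 ^ 2 := by
    have : φ 0 ≠ 0 ∨ θ 0 ≠ 0 := by
      by_contra h
      push_neg at h
      exact hne (by simp [h.1, h.2])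
    rcases this with h | h
    · positivity
    · positivity
  have h1 : Tendsto (fun t : ℝ => (φ t) ^ 2 + (θ t) ^ 2) atTop (nhds 0) := by
    have hφ0 : Tendsto φ atTop (nhds 0) := (continuous_fst.tendsto _).comp htend
    have hθ0 : Tendsto θ atTop (nhds 0) := (continuous_snd.tendsto _).comp htend
    have := ((hφ0.pow 2).add (hθ0.pow 2))
    simpa using this
  have h2 : Tendsto (fun _ : ℝ => φ 0 ^ 2 + θ 0 ^ 2) atTop (nhds (φ 0 ^ 2 + θ 0 ^ 2)) :=
    tendsto_const_nhds
  have heq : (0 : ℝ) = φ 0 ^ 2 + θ 0 ^ 2 :=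
    tendsto_nhds_unique (h1.congr fun t => (hconst t)) h2
  linarith
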